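/- Let E be a closed aggregate atom that is anti-monotone, i.e., for all Δ ⊆ Δ′ ⊆ A, if Δ′ justifies E then Δ justifies E. Then τE is strongly equivalent to the formula obtained from τE by replacing the consequent of every implication by ⊥, i.e., to the conjunction, over all Δ ⊆ A that do not justify E, of the formulas ¬⋀_{(i,r)∈Δ} τ∨((Lᵢ)ʳ_{xᵢ}). -/

import Mathlib

namespace AG

/-! Infinitary propositional formulas (Truszczyński), satisfaction, reducts,
stable models, and strong equivalence. Conjunctions and disjunctions over
arbitrary sets of formulas are represented by (Type-valued) indexed families. -/

inductive Formula (σ : Type) : Type 1 where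
  | atom : σ → Formula σ
  | conj : (ι : Type) → (ι → Formula σ) → Formula σ
  | disj : (ι : Type) → (ι → Formula σ) → Formula σ
  | impl : Formula σ → Formula σ → Formula σ

namespace Formula

def bot {σ : Type} : Formula σ := disj Empty (fun e => e.elim)

def top {σ : Type} : Formula σ := conj Empty (fun e => e.elim)

def neg {σ : Type} (F : Formula σ) : Formula σ := impl F bot

def and {σ : Type} (F G : Formula σ) : Formula σ :=
  conj Bool (fun b => if b then F else G)

def or {σ : Type} (F G : Formula σ) : Formula σ :=
  disj Bool (fun b => if b then F else G)

end Formula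

/-- Satisfaction of an infinitary formula by an interpretation `I ⊆ σ`. -/
def Sat {σ : Type} (I : Set σ) : Formula σ → Prop
  | .atom p => p ∈ I
  | .conj _ f => ∀ i, Sat I (f i)
  | .disj _ f => ∃ i, Sat I (f i)
  | .impl F G => Sat I F → Sat I G

open Classical in
/-- The reduct `F^I` of a formula `F` with respect to an interpretation `I`. -/
noncomputable def reduct {σ : Type} (I : Set σ) : Formula σ → Formula σ
  | .atom p => if p ∈ I then .atom p else .bot
  | .conj ι f => .conj ι (fun i => reduct I (f i))
  | .disj ι f => .disj ι (fun i => reduct I (f i))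
  | .impl F G => if Sat I (.impl F G) then .impl (reduct I F) (reduct I G) else .bot

/-- `I` is a stable model of a set `H` of infinitary formulas: `I` is minimal with
respect to set inclusion among the interpretations satisfying the reducts (w.r.t. `I`)
of all formulas in `H`. -/
def IsStableModel {σ : Type} (H : Set (Formula σ)) (I : Set σ) : Prop :=
  (∀ F ∈ H, Sat I (reduct I F)) ∧
  ∀ J : Set σ, J ⊆ I → (∀ F ∈ H, Sat J (reduct I F)) → J = I

/-- Strong equivalence of infinitary formulas: `H ∪ {F}` and `H ∪ {G}` have the same
stable models for every set `H` of formulas. -/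
def StronglyEquivalent {σ : Type} (F G : Formula σ) : Prop :=
  ∀ (H : Set (Formula σ)) (I : Set σ),
    IsStableModel (insert F H) I ↔ IsStableModel (insert G H) I

/-! Terms of Abstract Gringo: numerals, the symbols `inf`/`sup`, symbolic
constants, variables, function terms, arithmetic/interval terms, and tuples. -/

inductive AGOp : Type where
  | add | sub | mul | div | interval

inductive AGTerm : Type where
  | num : ℤ → AGTerm
  | inf : AGTerm
  | sup : AGTerm
  | sym : ℕ → AGTerm
  | var : ℕ → AGTerm
  | fn : ℕ → List AGTerm → AGTerm
  | bin : AGOp → AGTerm → AGTerm → AGTerm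
  | tuple : List AGTerm → AGTerm

mutual

/-- `tval t` is the set `[t]` of values of a ground term `t`. -/
def tval : AGTerm → Set AGTerm
  | AGTerm.num n => {u | u = AGTerm.num n}
  | AGTerm.inf => {u | u = AGTerm.inf}
  | AGTerm.sup => {u | u = AGTerm.sup}
  | AGTerm.sym c => {u | u = AGTerm.sym c}
  | AGTerm.var _ => ∅
  | AGTerm.fn f ts => {u | ∃ rs ∈ tvalList ts, u = AGTerm.fn f rs}
  | AGTerm.bin AGOp.add t₁ t₂ =>
      {u | ∃ n₁ n₂ : ℤ, AGTerm.num n₁ ∈ tval t₁ ∧ AGTerm.num n₂ ∈ tval t₂ ∧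
        u = AGTerm.num (n₁ + n₂)}
  | AGTerm.bin AGOp.sub t₁ t₂ =>
      {u | ∃ n₁ n₂ : ℤ, AGTerm.num n₁ ∈ tval t₁ ∧ AGTerm.num n₂ ∈ tval t₂ ∧
        u = AGTerm.num (n₁ - n₂)}
  | AGTerm.bin AGOp.mul t₁ t₂ =>
      {u | ∃ n₁ n₂ : ℤ, AGTerm.num n₁ ∈ tval t₁ ∧ AGTerm.num n₂ ∈ tval t₂ ∧
        u = AGTerm.num (n₁ * n₂)}
  | AGTerm.bin AGOp.div t₁ t₂ =>
      {u | ∃ n₁ n₂ : ℤ, AGTerm.num n₁ ∈ tval t₁ ∧ AGTerm.num n₂ ∈ tval t₂ ∧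
        n₂ ≠ 0 ∧ u = AGTerm.num (Int.fdiv n₁ n₂)}
  | AGTerm.bin AGOp.interval t₁ t₂ =>
      {u | ∃ m n₁ n₂ : ℤ, AGTerm.num n₁ ∈ tval t₁ ∧ AGTerm.num n₂ ∈ tval t₂ ∧
        n₁ ≤ m ∧ m ≤ n₂ ∧ u = AGTerm.num m}
  | AGTerm.tuple ts => {u | ∃ rs ∈ tvalList ts, u = AGTerm.tuple rs}

/-- `tvalList ts` is the set `[t]` of values of a tuple `t` of ground terms
(componentwise evaluation). -/
def tvalList : List AGTerm → Set (List AGTerm)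
  | [] => {l | l = []}
  | t :: ts => {l | ∃ r ∈ tval t, ∃ rs ∈ tvalList ts, l = r :: rs}

end

/-- A term is ground if it contains no variables. -/
inductive Ground : AGTerm → Prop where
  | num (n : ℤ) : Ground (AGTerm.num n)
  | inf : Ground AGTerm.inf
  | sup : Ground AGTerm.sup
  | sym (c : ℕ) : Ground (AGTerm.sym c)
  | fn (f : ℕ) (ts : List AGTerm) : (∀ t ∈ ts, Ground t) → Ground (AGTerm.fn f ts)
  | bin (o : AGOp) (t₁ t₂ : AGTerm) :
      Ground t₁ → Ground t₂ → Ground (AGTerm.bin o t₁ t₂)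
  | tuple (ts : List AGTerm) : (∀ t ∈ ts, Ground t) → Ground (AGTerm.tuple ts)

/-- A term is precomputed if it contains neither variables nor the symbols
`+ - × / ..`. -/
inductive Precomputed : AGTerm → Prop where
  | num (n : ℤ) : Precomputed (AGTerm.num n)
  | inf : Precomputed AGTerm.inf
  | sup : Precomputed AGTerm.sup
  | sym (c : ℕ) : Precomputed (AGTerm.sym c)
  | fn (f : ℕ) (ts : List AGTerm) :
      (∀ t ∈ ts, Precomputed t) → Precomputed (AGTerm.fn f ts)
  | tuple (ts : List AGTerm) :
      (∀ t ∈ ts, Precomputed t) → Precomputed (AGTerm.tuple ts)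

/-- A term is interval-free if it does not contain the symbol `..`. -/
inductive IntervalFree : AGTerm → Prop where
  | num (n : ℤ) : IntervalFree (AGTerm.num n)
  | inf : IntervalFree AGTerm.inf
  | sup : IntervalFree AGTerm.sup
  | sym (c : ℕ) : IntervalFree (AGTerm.sym c)
  | var (v : ℕ) : IntervalFree (AGTerm.var v)
  | fn (f : ℕ) (ts : List AGTerm) :
      (∀ t ∈ ts, IntervalFree t) → IntervalFree (AGTerm.fn f ts)
  | bin (o : AGOp) (t₁ t₂ : AGTerm) : o ≠ AGOp.interval →
      IntervalFree t₁ → IntervalFree t₂ → IntervalFree (AGTerm.bin o t₁ t₂)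
  | tuple (ts : List AGTerm) :
      (∀ t ∈ ts, IntervalFree t) → IntervalFree (AGTerm.tuple ts)

/-- The variable `v` occurs in the term. -/
inductive VarOccurs (v : ℕ) : AGTerm → Prop where
  | var : VarOccurs v (AGTerm.var v)
  | fn {f : ℕ} {ts : List AGTerm} {t : AGTerm} :
      t ∈ ts → VarOccurs v t → VarOccurs v (AGTerm.fn f ts)
  | binLeft {o : AGOp} {t₁ t₂ : AGTerm} :
      VarOccurs v t₁ → VarOccurs v (AGTerm.bin o t₁ t₂)
  | binRight {o : AGOp} {t₁ t₂ : AGTerm} :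
      VarOccurs v t₂ → VarOccurs v (AGTerm.bin o t₁ t₂)
  | tuple {ts : List AGTerm} {t : AGTerm} :
      t ∈ ts → VarOccurs v t → VarOccurs v (AGTerm.tuple ts)

/-- The substitution mapping the variables in the list `xs` to the corresponding
members of the list `rs` (and every other variable to itself). -/
def assign (xs : List ℕ) (rs : List AGTerm) (v : ℕ) : AGTerm :=
  ((xs.zip rs).lookup v).getD (AGTerm.var v)

/-- Applying a substitution to a term. -/
def subst (ρ : ℕ → AGTerm) : AGTerm → AGTerm
  | AGTerm.num n => AGTerm.num n
  | AGTerm.inf => AGTerm.inf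
  | AGTerm.sup => AGTerm.sup
  | AGTerm.sym c => AGTerm.sym c
  | AGTerm.var v => ρ v
  | AGTerm.fn f ts => AGTerm.fn f (ts.attach.map (fun x => subst ρ x.1))
  | AGTerm.bin o t₁ t₂ => AGTerm.bin o (subst ρ t₁) (subst ρ t₂)
  | AGTerm.tuple ts => AGTerm.tuple (ts.attach.map (fun x => subst ρ x.1))
termination_by t => sizeOf t
decreasing_by
  all_goals simp_wf
  all_goals try (cases x; simp_all)
  all_goals first
    | (rename_i hmem; have := List.sizeOf_lt_of_mem hmem; omega)
    | omega

/-- Tuples of precomputed terms of length `k`. -/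
def PTuple (k : ℕ) : Type :=
  {r : List AGTerm // r.length = k ∧ ∀ u ∈ r, Precomputed u}

/-- The data of the aggregate elements `t₁ : L₁ ; … ; tₙ : Lₙ` of an aggregate
atom: for each `i`, the list `xᵢ` of variables of `tᵢ : Lᵢ`, the tuple `tᵢ` of
terms, and the function sending a tuple `r` of precomputed terms (to be
substituted for `xᵢ`) to the infinitary formula `τ∨((Lᵢ)ʳ_{xᵢ})`. -/
structure AggAtom (σ : Type) where
  n : ℕ
  x : Fin n → List ℕ
  t : Fin n → List AGTerm
  L : (i : Fin n) → List AGTerm → Formula σ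

/-- The index set `A = {(i, r) : 1 ≤ i ≤ n, r ∈ Aᵢ}`, where `Aᵢ` is the set of
tuples of precomputed terms of the same length as `xᵢ`. -/
def Idx {σ : Type} (E : AggAtom σ) : Type :=
  Σ i : Fin E.n, PTuple (E.x i).length

/-- `[(tᵢ)ʳ_{xᵢ}]` for `a = (i, r) ∈ A`. -/
def elemVal {σ : Type} (E : AggAtom σ) (a : Idx E) : Set (List AGTerm) :=
  tvalList ((E.t a.1).map (subst (assign (E.x a.1) a.2.1)))

/-- `[Δ]`: the union of the sets `[(tᵢ)ʳ_{xᵢ}]` over `(i, r) ∈ Δ`. -/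
def deltaVal {σ : Type} (E : AggAtom σ) (Δ : Set (Idx E)) : Set (List AGTerm) :=
  ⋃ a ∈ Δ, elemVal E a

/-- `τ∨((Lᵢ)ʳ_{xᵢ})` for `a = (i, r) ∈ A`. -/
def fml {σ : Type} (E : AggAtom σ) (a : Idx E) : Formula σ :=
  E.L a.1 a.2.1

/-- `Δ` justifies the aggregate atom `α{t₁ : L₁ ; … ; tₙ : Lₙ} ≺ s`: the
relation `cmp` (the one denoted by `≺`) holds between `α̂[Δ]` and at least one
precomputed term `u ∈ [s]`. -/
def Justifies {σ : Type} (E : AggAtom σ) (alphaHat : Set (List AGTerm) → AGTerm)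
    (cmp : AGTerm → AGTerm → Prop) (s : AGTerm) (Δ : Set (Idx E)) : Prop :=
  ∃ u ∈ tval s, cmp (alphaHat (deltaVal E Δ)) u

/-- `τE`: the conjunction, over all `Δ ⊆ A` that do not justify `E`, of the
implications `⋀_{(i,r)∈Δ} τ∨((Lᵢ)ʳ_{xᵢ}) → ⋁_{(i,r)∈A∖Δ} τ∨((Lᵢ)ʳ_{xᵢ})`. -/
def tauAgg {σ : Type} (E : AggAtom σ) (justifies : Set (Idx E) → Prop) :
    Formula σ :=
  Formula.conj {Δ : Set (Idx E) // ¬ justifies Δ} (fun Δ =>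
    Formula.impl
      (Formula.conj {a : Idx E // a ∈ Δ.1} (fun a => fml E a.1))
      (Formula.disj {a : Idx E // a ∉ Δ.1} (fun a => fml E a.1)))

lemma not_sat_bot {σ : Type} (I : Set σ) : ¬ Sat I (Formula.bot) := by
  simp only [Formula.bot, Sat]
  rintro ⟨i, -⟩; exact i.elim

lemma not_sat_reduct_bot {σ : Type} (I J : Set σ) :
    ¬ Sat J (reduct I (Formula.bot)) := by
  simp only [Formula.bot, reduct, Sat]
  rintro ⟨i, -⟩; exact i.elim

lemma sat_of_sat_reduct {σ : Type} {I J : Set σ} :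
    ∀ {F : Formula σ}, Sat J (reduct I F) → Sat I F := by
  intro F
  induction F with
  | atom p =>
      intro h
      rw [reduct] at h
      split at h
      · assumption
      · exact absurd h (not_sat_bot J)
  | conj ι f ih =>
      intro h i
      exact ih i (h i)
  | disj ι f ih =>
      intro h
      obtain ⟨i, hi⟩ := h
      exact ⟨i, ih i hi⟩
  | impl F G ihF ihG =>
      intro h
      rw [reduct] at h
      split at h
      · assumption
      · exact absurd h (not_sat_bot J)

lemma sat_reduct_neg_iff {σ : Type} (I J : Set σ) (F : Formula σ) :
    Sat J (reduct I (Formula.neg F)) ↔ ¬ Sat I F := by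
  constructor
  · intro h
    rw [Formula.neg, reduct] at h
    split at h
    · rename_i hc
      intro hF
      exact not_sat_bot I (hc hF)
    · exact absurd h (not_sat_bot J)
  · intro hnF
    rw [Formula.neg, reduct]
    split
    · intro hJ
      exact absurd (sat_of_sat_reduct hJ) hnF
    · rename_i hc
      exact absurd (fun hF => absurd hF hnF) hc

lemma stableModel_congr {σ : Type} {F G : Formula σ}
    (h : ∀ I J : Set σ, Sat J (reduct I F) ↔ Sat J (reduct I G))
    (H : Set (Formula σ)) (I : Set σ) :
    IsStableModel (insert F H) I → IsStableModel (insert G H) I := by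
  rintro ⟨h1, h2⟩
  constructor
  · intro K hK
    rcases hK with rfl | hK
    · exact (h I I).mp (h1 F (Set.mem_insert _ _))
    · exact h1 K (Set.mem_insert_of_mem _ hK)
  · intro J hJI hJ
    apply h2 J hJI
    intro K hK
    rcases hK with rfl | hK
    · exact (h I J).mpr (hJ G (Set.mem_insert _ _))
    · exact hJ K (Set.mem_insert_of_mem _ hK)

lemma stronglyEquivalent_of_reduct_iff {σ : Type} {F G : Formula σ}
    (h : ∀ I J : Set σ, Sat J (reduct I F) ↔ Sat J (reduct I G)) :
    StronglyEquivalent F G :=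
  fun H I => ⟨stableModel_congr h H I,
    stableModel_congr (fun I J => (h I J).symm) H I⟩

lemma key_iff {σ : Type} (E : AggAtom σ) (just : Set (Idx E) → Prop)
    (hanti : ∀ Δ Δ' : Set (Idx E), Δ ⊆ Δ' → just Δ' → just Δ)
    (I J : Set σ) :
    Sat J (reduct I (tauAgg E just)) ↔
    Sat J (reduct I (Formula.conj {Δ : Set (Idx E) // ¬ just Δ}
      (fun Δ => Formula.neg
        (Formula.conj {a : Idx E // a ∈ Δ.1} (fun a => fml E a.1))))) := by
  have hRHS : Sat J (reduct I (Formula.conj {Δ : Set (Idx E) // ¬ just Δ}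
      (fun Δ => Formula.neg
        (Formula.conj {a : Idx E // a ∈ Δ.1} (fun a => fml E a.1))))) ↔
      ∀ Δ : {Δ : Set (Idx E) // ¬ just Δ},
        ¬ Sat I (Formula.conj {a : Idx E // a ∈ Δ.1} (fun a => fml E a.1)) := by
    rw [reduct]
    constructor
    · intro h Δ
      exact (sat_reduct_neg_iff I J _).mp (h Δ)
    · intro h Δ
      exact (sat_reduct_neg_iff I J _).mpr (h Δ)
  rw [hRHS]
  constructor
  · -- forward direction: uses anti-monotonicity
    intro hL Δ hC
    set Δstar : Set (Idx E) := {a | Sat I (fml E a)} with hDs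
    have hsub : Δ.1 ⊆ Δstar := by
      intro a ha
      exact hC ⟨a, ha⟩
    have hns : ¬ just Δstar := fun hj => Δ.2 (hanti Δ.1 Δstar hsub hj)
    unfold tauAgg at hL
    simp only [reduct, Sat] at hL
    have h2 := hL ⟨Δstar, hns⟩
    split_ifs at h2
    · rename_i hc
      have hcc : Sat I (Formula.conj {a : Idx E // a ∈ Δstar}
          (fun a => fml E a.1)) := fun a => a.2
      obtain ⟨a, ha⟩ := hc hcc
      exact a.2 ha
    · rename_i hc0
      erw [if_neg hc0] at h2
      exact absurd h2 (not_sat_bot J)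
  · intro hR
    unfold tauAgg
    simp only [reduct, Sat]
    intro Δ
    split_ifs
    · rename_i hc0
      erw [if_pos hc0]
      intro hJ
      have hJ' : Sat I (Formula.conj {a : Idx E // a ∈ Δ.1} (fun a => fml E a.1)) :=
        fun a => sat_of_sat_reduct (hJ a)
      exact absurd hJ' (hR Δ)
    · rename_i hc
      exact absurd (fun hCC => absurd hCC (hR Δ)) hc

/-- **Anti-monotone aggregate atoms.**
If a closed aggregate atom `E` is anti-monotone (whenever `Δ ⊆ Δ' ⊆ A` and `Δ'`
justifies `E`, so does `Δ`), then `τE` is strongly equivalent to the formula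
obtained from `τE` by replacing the consequent of every implication by `⊥`. -/
theorem antimonotone_bot_consequents {σ : Type} (E : AggAtom σ)
    (hclosed : ∀ i : Fin E.n, ∀ u ∈ E.t i, ∀ v : ℕ, VarOccurs v u → v ∈ E.x i)
    (alphaHat : Set (List AGTerm) → AGTerm)
    (cmp : AGTerm → AGTerm → Prop) (s : AGTerm) (hground : Ground s)
    (hanti : ∀ Δ Δ' : Set (Idx E), Δ ⊆ Δ' →
      Justifies E alphaHat cmp s Δ' → Justifies E alphaHat cmp s Δ) :
    StronglyEquivalent
      (tauAgg E (Justifies E alphaHat cmp s))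
      (Formula.conj {Δ : Set (Idx E) // ¬ Justifies E alphaHat cmp s Δ}
        (fun Δ => Formula.neg
          (Formula.conj {a : Idx E // a ∈ Δ.1} (fun a => fml E a.1)))) := by
  exact stronglyEquivalent_of_reduct_iff
    (key_iff E (Justifies E alphaHat cmp s) hanti)

end AG
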